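/- Let (X, ‖·‖) be a Banach space, let T : X → X be a (k, a)-enriched Kannan mapping with k ∈ [0, ∞) and a ∈ [0, 1/2), let λ = 1/(k+1), let p be the unique fixed point of T, and let (xₙ) be the Krasnoselskij iteration xₙ₊₁ = (1−λ)xₙ + λT xₙ with arbitrary x₀ ∈ X. Then, with δ = a/(1−a), the a priori error estimate ‖xₙ − p‖ ≤ (δⁿ/(1−δ))·‖x₁ − x₀‖ holds for all n ≥ 1. -/

import Mathlib

/-- A priori error estimate for the Krasnoselskij iteration associated to a
`(k, a)`-enriched Kannan mapping: with `δ = a/(1−a)`,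
`‖xₙ − p‖ ≤ (δⁿ/(1−δ))·‖x₁ − x₀‖` for all `n ≥ 1`. -/
theorem enrichedKannan_krasnoselskij_apriori_estimate
    {X : Type*} [NormedAddCommGroup X] [NormedSpace ℝ X] [CompleteSpace X]
    (T : X → X) (k a : ℝ) (hk : 0 ≤ k) (ha0 : 0 ≤ a) (ha : a < 1 / 2)
    (hT : ∀ x y : X, ‖k • (x - y) + (T x - T y)‖ ≤ a * (‖x - T x‖ + ‖y - T y‖))
    (p : X) (hp : T p = p) (hpu : ∀ q : X, T q = q → q = p)
    (x : ℕ → X)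
    (hx : ∀ n : ℕ, x (n + 1) = (1 - 1 / (k + 1)) • x n + (1 / (k + 1)) • T (x n)) :
    ∀ n : ℕ, 1 ≤ n →
      ‖x n - p‖ ≤ (a / (1 - a)) ^ n / (1 - a / (1 - a)) * ‖x 1 - x 0‖ := by
  set l : ℝ := 1 / (k + 1) with hl
  have hk1 : (0:ℝ) < k + 1 := by linarith
  have hlpos : 0 < l := by positivity
  have hone : 1 - l = l * k := by rw [hl]; field_simp; ring
  have ha1 : a < 1 := by linarith
  set δ : ℝ := a / (1 - a) with hδ
  have h1a : (0:ℝ) < 1 - a := by linarith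
  have hδ0 : 0 ≤ δ := div_nonneg ha0 h1a.le
  have hδ1 : δ < 1 := by rw [hδ, div_lt_one h1a]; linarith
  have hδlt : 0 < 1 - δ := by linarith
  -- the averaged map is a Kannan contraction
  have key : ∀ u v : X,
      ‖((1-l)•u + l•T u) - ((1-l)•v + l•T v)‖ ≤
        a * (‖u - ((1-l)•u + l•T u)‖ + ‖v - ((1-l)•v + l•T v)‖) := by
    intro u v
    have e1 : ((1-l)•u + l•T u) - ((1-l)•v + l•T v) = l • (k•(u-v) + (T u - T v)) := by
      rw [hone]; module
    have e2 : u - ((1-l)•u + l•T u) = l • (u - T u) := by module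
    have e3 : v - ((1-l)•v + l•T v) = l • (v - T v) := by module
    rw [e1, e2, e3, norm_smul, norm_smul, norm_smul, Real.norm_eq_abs,
      abs_of_pos hlpos]
    have h := hT u v
    nlinarith [mul_le_mul_of_nonneg_left h hlpos.le, norm_nonneg (u - T u),
      norm_nonneg (v - T v)]
  have hstep : ∀ n : ℕ, ‖x (n+2) - x (n+1)‖ ≤ δ * ‖x (n+1) - x n‖ := by
    intro n
    have h1 := key (x n) (x (n+1))
    rw [← hx n, ← hx (n+1)] at h1
    rw [norm_sub_rev (x (n+1)) (x (n+2)), norm_sub_rev (x n) (x (n+1))] at h1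
    rw [hδ, div_mul_eq_mul_div, le_div_iff₀ h1a]
    nlinarith [norm_nonneg (x (n+2) - x (n+1))]
  have hd : ∀ n : ℕ, ‖x (n+1) - x n‖ ≤ δ ^ n * ‖x 1 - x 0‖ := by
    intro n
    induction n with
    | zero => simp
    | succ m ih =>
      calc ‖x (m+2) - x (m+1)‖ ≤ δ * ‖x (m+1) - x m‖ := hstep m
        _ ≤ δ * (δ ^ m * ‖x 1 - x 0‖) := by
            exact mul_le_mul_of_nonneg_left ih hδ0
        _ = δ ^ (m+1) * ‖x 1 - x 0‖ := by ring
  have hfp : (1-l)•p + l•T p = p := by rw [hp]; module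
  have hδdef : δ * (1 - a) = a := by rw [hδ]; field_simp
  have haux : a ≤ δ / (1 - δ) := by
    rw [le_div_iff₀ hδlt]
    nlinarith [mul_nonneg hδ0 ha0, mul_nonneg hδ0 hδ0]
  intro n hn
  obtain ⟨m, rfl⟩ : ∃ m, n = m + 1 := ⟨n - 1, by omega⟩
  have h := key (x m) p
  rw [← hx m, hfp, sub_self, norm_zero, add_zero, norm_sub_rev (x m)] at h
  calc ‖x (m+1) - p‖ ≤ a * ‖x (m+1) - x m‖ := h
    _ ≤ a * (δ ^ m * ‖x 1 - x 0‖) := mul_le_mul_of_nonneg_left (hd m) ha0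
    _ ≤ (δ / (1 - δ)) * (δ ^ m * ‖x 1 - x 0‖) := by
        exact mul_le_mul_of_nonneg_right haux (by positivity)
    _ = δ ^ (m+1) / (1 - δ) * ‖x 1 - x 0‖ := by ring
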